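/- Let μ be a finite positive measure on the unit disc such that for every dyadic Carleson square C, μ(T(C)) ≥ τ·μ(C) where T(C) is the top half of C and τ > 0. Let D and d be nonnegative functions on the disc, constant on top halves of dyadic Carleson squares, with D the 'ancestral maximum' of d (D on the top half of C equals the max of d over the top halves of C and all its ancestors). Then for every λ > 0, τ·μ{z : D(z) ≥ λ} ≤ μ{z : d(z) ≥ λ}. -/

import Mathlib

open MeasureTheory
open scoped NNReal ENNReal

/-- The dyadic Carleson square at level `n` with angular index `k` (`k < 2^n`):
`1 - 2^{-n} ≤ |z| < 1` and the argument lies in the dyadic arc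
`[2πk/2^n, 2π(k+1)/2^n)`. -/
def carlesonSq (n k : ℕ) : Set ℂ :=
  {z : ℂ | 1 - (2:ℝ) ^ (-(n:ℤ)) ≤ ‖z‖ ∧ ‖z‖ < 1 ∧
    ∃ θ : ℝ, z = (‖z‖ : ℂ) * Complex.exp ((θ : ℂ) * Complex.I) ∧
      2 * Real.pi * k / 2 ^ n ≤ θ ∧ θ < 2 * Real.pi * (k + 1) / 2 ^ n}

/-- The top half of the dyadic Carleson square: the part with
`1 - 2^{-n} ≤ |z| < 1 - 2^{-n-1}`. -/
def carlesonTop (n k : ℕ) : Set ℂ :=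
  {z ∈ carlesonSq n k | ‖z‖ < 1 - (2:ℝ) ^ (-(n:ℤ) - 1)}

section AuxCarleson
open Set
open scoped Real

noncomputable def theta (z : ℂ) : ℝ :=
  if 0 ≤ Complex.arg z then Complex.arg z else Complex.arg z + 2 * π

lemma theta_mem (z : ℂ) : theta z ∈ Ico 0 (2 * π) := by
  have h := Complex.arg_mem_Ioc z
  have hπ := Real.pi_pos
  unfold theta
  split <;> constructor <;> [skip; skip; skip; skip] <;>
    simp only [mem_Ioc] at h <;> nlinarith [h.1, h.2]

lemma measurable_theta : Measurable theta := by
  unfold theta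
  exact Measurable.ite (measurableSet_le measurable_const Complex.measurable_arg)
    Complex.measurable_arg (Complex.measurable_arg.add_const _)

lemma exp_theta (z : ℂ) : (‖z‖ : ℂ) * Complex.exp ((theta z : ℂ) * Complex.I) = z := by
  unfold theta
  split
  · exact Complex.norm_mul_exp_arg_mul_I z
  · rw [show ((↑(Complex.arg z + 2 * π) : ℂ)) = Complex.arg z + 2 * π by push_cast; ring]
    rw [add_mul, Complex.exp_add]
    rw [Complex.exp_two_pi_mul_I, mul_one]
    exact Complex.norm_mul_exp_arg_mul_I z

lemma theta_unique {z : ℂ} (hz : z ≠ 0) {t : ℝ} (ht : t ∈ Ico 0 (2 * π))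
    (h : z = (‖z‖ : ℂ) * Complex.exp ((t : ℂ) * Complex.I)) : t = theta z := by
  have h2 := exp_theta z
  have habs : (‖z‖ : ℂ) ≠ 0 := by
    simpa using (norm_ne_zero_iff.mpr hz)
  have : Complex.exp ((t : ℂ) * Complex.I) = Complex.exp ((theta z : ℂ) * Complex.I) := by
    have := h.symm.trans h2.symm
    exact mul_left_cancel₀ habs this
  rw [Complex.exp_eq_exp_iff_exists_int] at this
  obtain ⟨n, hn⟩ := this
  have hre : t = theta z + n * (2 * π) := by
    have h3 : ((t : ℂ)) * Complex.I = ((theta z : ℂ) + n * (2 * π)) * Complex.I := by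
      rw [hn]; ring
    have h4 := mul_right_cancel₀ Complex.I_ne_zero h3
    exact_mod_cast h4
  have htm := theta_mem z
  have hπ := Real.pi_pos
  have hn0 : n = 0 := by
    rcases lt_trichotomy n 0 with h' | h' | h'
    · have : (n : ℝ) ≤ -1 := by exact_mod_cast Int.le_of_lt_add_one (by omega : n < -1 + 1)
      nlinarith [ht.1, ht.2, htm.1, htm.2]
    · exact h'
    · have : (1 : ℝ) ≤ n := by exact_mod_cast h'
      nlinarith [ht.1, ht.2, htm.1, htm.2]
  simp [hn0] at hre
  exact hre

lemma mem_sq_iff {n k : ℕ} (hk : k < 2 ^ n) {z : ℂ} :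
    z ∈ carlesonSq n k ↔ 1 - (2:ℝ) ^ (-(n:ℤ)) ≤ ‖z‖ ∧ ‖z‖ < 1 ∧
      2 * π * k / 2 ^ n ≤ theta z ∧ theta z < 2 * π * (k + 1) / 2 ^ n := by
  constructor
  · rintro ⟨h1, h2, θ, hθ, ha, hb⟩
    refine ⟨h1, h2, ?_⟩
    rcases eq_or_ne z 0 with rfl | hz
    · -- z = 0 : forces n = 0, k = 0
      simp only [norm_zero] at h1
      have hn : (2:ℝ) ^ (-(n:ℤ)) ≤ 1 := by
        apply zpow_le_one_of_nonpos₀ (by norm_num) (by omega)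
      have hn1 : (1:ℝ) ≤ 2 ^ (-(n:ℤ)) := by linarith
      have hn0 : n = 0 := by
        by_contra h
        have h5 : (2:ℝ) ^ (-(n:ℤ)) ≤ 2 ^ (-1:ℤ) := by
          apply zpow_le_zpow_right₀ (by norm_num)
          omega
        norm_num at h5
        rw [zpow_neg, zpow_natCast] at hn1
        linarith
      subst hn0
      interval_cases k
      have : theta 0 = 0 := by simp [theta, Complex.arg_zero]
      rw [this]
      constructor
      · simp
      · have := Real.pi_pos; rw [show ((0:ℕ):ℝ) + 1 = 1 by norm_num]
        norm_num; linarith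
    · have hθ' : θ ∈ Ico 0 (2 * π) := by
        have hπ := Real.pi_pos
        have hnum : (0:ℝ) < 2 ^ n := by positivity
        constructor
        · have : (0:ℝ) ≤ 2 * π * k / 2 ^ n := by positivity
          linarith
        · have hk1 : ((k:ℝ) + 1) ≤ 2 ^ n := by
            have : (k:ℝ) + 1 ≤ (2:ℝ) ^ n := by exact_mod_cast Nat.succ_le_of_lt hk
            exact this
          have : 2 * π * (k + 1) / 2 ^ n ≤ 2 * π := by
            rw [div_le_iff₀ hnum]
            nlinarith
          linarith
      rw [← theta_unique hz hθ' hθ]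
      exact ⟨ha, hb⟩
  · rintro ⟨h1, h2, ha, hb⟩
    exact ⟨h1, h2, theta z, (exp_theta z).symm, ha, hb⟩

lemma measurableSet_sq {n k : ℕ} (hk : k < 2 ^ n) : MeasurableSet (carlesonSq n k) := by
  have : carlesonSq n k = {z : ℂ | 1 - (2:ℝ) ^ (-(n:ℤ)) ≤ ‖z‖} ∩
      {z | ‖z‖ < 1} ∩ {z | 2 * π * k / 2 ^ n ≤ theta z} ∩
      {z | theta z < 2 * π * (k + 1) / 2 ^ n} := by
    ext z; rw [mem_sq_iff hk]; simp only [Set.mem_inter_iff, Set.mem_setOf_eq]; tauto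
  rw [this]
  have hab : Measurable (fun z : ℂ => ‖z‖) := continuous_norm.measurable
  exact (((measurableSet_le measurable_const hab).inter
    (measurableSet_lt hab measurable_const)).inter
    (measurableSet_le measurable_const measurable_theta)).inter
    (measurableSet_lt measurable_theta measurable_const)

lemma measurableSet_top {n k : ℕ} (hk : k < 2 ^ n) : MeasurableSet (carlesonTop n k) := by
  have hab : Measurable (fun z : ℂ => ‖z‖) := continuous_norm.measurable
  exact (measurableSet_sq hk).inter (measurableSet_lt hab measurable_const)

lemma exists_top {z : ℂ} (hz : ‖z‖ < 1) :
    ∃ n k : ℕ, k < 2 ^ n ∧ z ∈ carlesonTop n k := by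
  set t : ℝ := 1 - ‖z‖ with ht
  have ht0 : 0 < t := by simp [ht]; linarith
  have hex : ∃ n : ℕ, (2:ℝ) ^ (-(n:ℤ) - 1) < t := by
    obtain ⟨n, hn⟩ := exists_pow_lt_of_lt_one ht0 (by norm_num : (1:ℝ)/2 < 1)
    refine ⟨n, lt_of_le_of_lt ?_ hn⟩
    have h6 : ((1:ℝ)/2) ^ n = (2:ℝ) ^ (-(n:ℤ)) := by
      rw [zpow_neg, zpow_natCast, div_pow, one_pow, one_div]
    rw [h6]
    apply zpow_le_zpow_right₀ (by norm_num)
    omega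
  set n := Nat.find hex with hndef
  have hn1 : (2:ℝ) ^ (-(n:ℤ) - 1) < t := Nat.find_spec hex
  have hn2 : t ≤ (2:ℝ) ^ (-(n:ℤ)) := by
    rcases Nat.eq_zero_or_pos n with h0 | h0
    · rw [h0]; simpa [ht] using (norm_nonneg z)
    · have h7 := Nat.find_min hex (m := n - 1) (by omega)
      push_neg at h7
      have he : (-(n:ℤ)) = -((n-1 : ℕ):ℤ) - 1 := by
        have : ((n-1:ℕ):ℤ) = (n:ℤ) - 1 := by omega
        rw [this]; ring
      rw [he]; exact h7
  have hr1 : 1 - (2:ℝ) ^ (-(n:ℤ)) ≤ ‖z‖ := by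
    simp only [ht] at hn2; linarith
  have hr2 : ‖z‖ < 1 - (2:ℝ) ^ (-(n:ℤ) - 1) := by
    simp only [ht] at hn1; linarith
  have hπ := Real.pi_pos
  have htm := theta_mem z
  set x : ℝ := theta z * 2 ^ n / (2 * π) with hx
  have hx0 : 0 ≤ x := by
    apply div_nonneg _ (by positivity)
    exact mul_nonneg htm.1 (by positivity)
  have hx2 : x < 2 ^ n := by
    rw [hx, div_lt_iff₀ (by positivity)]
    calc theta z * 2 ^ n < 2 * π * 2 ^ n := by
          have := htm.2; nlinarith [pow_pos (show (0:ℝ) < 2 by norm_num) n]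
      _ = 2 ^ n * (2 * π) := by ring
  refine ⟨n, ⌊x⌋₊, ?_, ?_⟩
  · have h8 : (⌊x⌋₊ : ℝ) < (2:ℝ) ^ n := lt_of_le_of_lt (Nat.floor_le hx0) hx2
    exact_mod_cast h8
  · have hkfl : ⌊x⌋₊ < 2 ^ n := by
      have h8 : (⌊x⌋₊ : ℝ) < (2:ℝ) ^ n := lt_of_le_of_lt (Nat.floor_le hx0) hx2
      exact_mod_cast h8
    refine ⟨(mem_sq_iff hkfl).2 ⟨hr1, by linarith [hr2, (show (0:ℝ) < (2:ℝ)^(-(n:ℤ)-1) by positivity)], ?_, ?_⟩, hr2⟩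
    · -- 2π⌊x⌋/2^n ≤ theta z
      rw [div_le_iff₀ (by positivity : (0:ℝ) < (2:ℝ)^n)]
      have := Nat.floor_le hx0
      rw [hx, le_div_iff₀ (by positivity : (0:ℝ) < 2*π)] at this
      nlinarith
    · rw [lt_div_iff₀ (by positivity : (0:ℝ) < (2:ℝ)^n)]
      have := Nat.lt_floor_add_one x
      rw [hx, div_lt_iff₀ (by positivity : (0:ℝ) < 2*π)] at this
      nlinarith

lemma mem_ancestor {n k m : ℕ} (hk : k < 2 ^ n) (hm : m ≤ n) {z : ℂ}
    (hz : z ∈ carlesonSq n k) : z ∈ carlesonSq m (k / 2 ^ (n - m)) := by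
  have hq : k / 2 ^ (n - m) < 2 ^ m := by
    rw [Nat.div_lt_iff_lt_mul (by positivity), ← pow_add]
    rwa [show m + (n - m) = n by omega]
  rw [mem_sq_iff hk] at hz
  rw [mem_sq_iff hq]
  obtain ⟨h1, h2, ha, hb⟩ := hz
  set q := k / 2 ^ (n - m) with hqdef
  have hπ := Real.pi_pos
  have hp1 : (0:ℝ) < 2 ^ n := by positivity
  have hp2 : (0:ℝ) < 2 ^ m := by positivity
  have hp3 : (0:ℝ) < 2 ^ (n - m) := by positivity
  have hpow : (2:ℝ) ^ (n - m) * 2 ^ m = 2 ^ n := by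
    rw [← pow_add, show n - m + m = n by omega]
  refine ⟨?_, h2, ?_, ?_⟩
  · have : (2:ℝ) ^ (-(n:ℤ)) ≤ 2 ^ (-(m:ℤ)) := by
      apply zpow_le_zpow_right₀ (by norm_num); omega
    linarith
  · have hqk : (q:ℝ) * 2 ^ (n - m) ≤ k := by
      exact_mod_cast Nat.div_mul_le_self k (2 ^ (n - m))
    rw [div_le_iff₀ hp2]
    rw [div_le_iff₀ hp1] at ha
    have key : 2 * π * q * 2 ^ (n-m) ≤ theta z * 2 ^ m * 2 ^ (n-m) := by
      calc 2 * π * (q:ℝ) * 2 ^ (n-m) = 2 * π * ((q:ℝ) * 2 ^ (n-m)) := by ring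
        _ ≤ 2 * π * k := by nlinarith
        _ ≤ theta z * 2 ^ n := ha
        _ = theta z * 2 ^ m * 2 ^ (n-m) := by rw [← hpow]; ring
    exact le_of_mul_le_mul_right key hp3
  · have hkq : (k:ℝ) + 1 ≤ ((q:ℝ) + 1) * 2 ^ (n - m) := by
      have h1' := Nat.div_add_mod k (2^(n-m))
      have h2' := Nat.mod_lt k (show 0 < 2^(n-m) by positivity)
      have h3' : (q + 1) * 2 ^ (n - m) = 2 ^ (n - m) * (k / 2 ^ (n - m)) + 2 ^ (n - m) := by
        rw [hqdef]; ring
      have : k + 1 ≤ (q + 1) * 2 ^ (n - m) := by omega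
      exact_mod_cast this
    rw [lt_div_iff₀ hp2]
    rw [lt_div_iff₀ hp1] at hb
    have key : theta z * 2 ^ m * 2 ^ (n-m) < 2 * π * ((q:ℝ)+1) * 2 ^ (n-m) := by
      calc theta z * 2 ^ m * 2 ^ (n-m) = theta z * 2 ^ n := by rw [← hpow]; ring
        _ < 2 * π * ((k:ℝ) + 1) := hb
        _ ≤ 2 * π * (((q:ℝ)+1) * 2 ^ (n-m)) := by nlinarith
        _ = 2 * π * ((q:ℝ)+1) * 2 ^ (n-m) := by ring
    exact lt_of_mul_lt_mul_right key (le_of_lt hp3)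

lemma same_level_eq {n k k' : ℕ} (hk : k < 2 ^ n) (hk' : k' < 2 ^ n) {z : ℂ}
    (h1 : z ∈ carlesonSq n k) (h2 : z ∈ carlesonSq n k') : k = k' := by
  rw [mem_sq_iff hk] at h1
  rw [mem_sq_iff hk'] at h2
  have hπ := Real.pi_pos
  have hp : (0:ℝ) < 2 ^ n := by positivity
  by_contra hne
  rcases Nat.lt_or_ge k k' with h | h
  · have hkk : (k:ℝ) + 1 ≤ k' := by exact_mod_cast h
    have hc : 2 * π * (k':ℝ) / 2 ^ n < 2 * π * ((k:ℝ)+1) / 2 ^ n :=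
      lt_of_le_of_lt h2.2.2.1 h1.2.2.2
    have hc' := (div_lt_div_iff₀ hp hp).mp hc
    have hc'' := lt_of_mul_lt_mul_right hc' (le_of_lt hp)
    nlinarith
  · have h' : k' < k := by omega
    have hkk : (k':ℝ) + 1 ≤ k := by exact_mod_cast h'
    have hc : 2 * π * (k:ℝ) / 2 ^ n < 2 * π * ((k':ℝ)+1) / 2 ^ n :=
      lt_of_le_of_lt h1.2.2.1 h2.2.2.2
    have hc' := (div_lt_div_iff₀ hp hp).mp hc
    have hc'' := lt_of_mul_lt_mul_right hc' (le_of_lt hp)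
    nlinarith

end AuxCarleson

/-- if every top half has `μ`-measure at least `τ` times the measure of its
square, `d` is constant on top halves, and `D` is the ancestral maximum of `d`, then
`τ μ{D ≥ λ} ≤ μ{d ≥ λ}` for every `λ > 0`. -/
theorem ancestral_max_distribution_bound (μ : Measure ℂ) [IsFiniteMeasure μ]
    (hsupp : μ {z : ℂ | 1 ≤ ‖z‖} = 0)
    (τ : ℝ) (hτ : 0 < τ)
    (hμ : ∀ n k : ℕ, k < 2 ^ n →
      ENNReal.ofReal τ * μ (carlesonSq n k) ≤ μ (carlesonTop n k))
    (dnode : ℕ → ℕ → ℝ≥0) (d D : ℂ → ℝ≥0)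
    (hd : ∀ n k : ℕ, k < 2 ^ n → ∀ z ∈ carlesonTop n k, d z = dnode n k)
    (hD : ∀ n k : ℕ, k < 2 ^ n → ∀ z ∈ carlesonTop n k,
      D z = (Finset.range (n + 1)).sup (fun m => dnode m (k / 2 ^ (n - m))))
    (lam : ℝ≥0) (hlam : 0 < lam) :
    ENNReal.ofReal τ * μ {z : ℂ | lam ≤ D z} ≤ μ {z : ℂ | lam ≤ d z} := by
  classical
  set τ' := ENNReal.ofReal τ with hτ'
  set M : Set (ℕ × ℕ) := {p | p.2 < 2 ^ p.1 ∧ lam ≤ dnode p.1 p.2 ∧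
      ∀ m < p.1, ¬ lam ≤ dnode m (p.2 / 2 ^ (p.1 - m))} with hM
  have hMc : M.Countable := Set.to_countable M
  -- Claim A
  have hA : {z : ℂ | lam ≤ D z} ∩ {z | ‖z‖ < 1} ⊆
      ⋃ p ∈ M, carlesonSq p.1 p.2 := by
    rintro z ⟨hDz, hz1⟩
    obtain ⟨n, k, hk, hzt⟩ := exists_top hz1
    simp only [Set.mem_setOf_eq] at hDz
    rw [hD n k hk z hzt] at hDz
    have hexm : ∃ m, m ≤ n ∧ lam ≤ dnode m (k / 2 ^ (n - m)) := by
      by_contra h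
      push_neg at h
      have hlt : (Finset.range (n+1)).sup (fun m => dnode m (k / 2 ^ (n - m))) < lam := by
        rw [Finset.sup_lt_iff (by exact hlam)]
        intro m hm
        exact h m (by have := Finset.mem_range.mp hm; omega)
      exact absurd hDz (not_le_of_gt hlt)
    set m := Nat.find hexm with hmdef
    obtain ⟨hmn, hmd⟩ := Nat.find_spec hexm
    have hq : k / 2 ^ (n - m) < 2 ^ m := by
      rw [Nat.div_lt_iff_lt_mul (by positivity), ← pow_add]
      rwa [show m + (n - m) = n by omega]
    have hmem : (m, k / 2 ^ (n - m)) ∈ M := by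
      refine ⟨hq, hmd, ?_⟩
      intro j hj hcon
      have hjn : j ≤ n := by omega
      have hdiv : k / 2 ^ (n - m) / 2 ^ (m - j) = k / 2 ^ (n - j) := by
        rw [Nat.div_div_eq_div_mul, ← pow_add, show n - m + (m - j) = n - j by omega]
      rw [hdiv] at hcon
      exact Nat.find_min hexm hj ⟨hjn, hcon⟩
    exact Set.mem_biUnion hmem (mem_ancestor hk hmn hzt.1)
  -- disjointness of squares over M
  have hdisjsq : ∀ p ∈ M, ∀ q ∈ M, p ≠ q →
      Disjoint (carlesonSq p.1 p.2) (carlesonSq q.1 q.2) := by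
    have key : ∀ p ∈ M, ∀ q ∈ M, p.1 ≤ q.1 → p ≠ q →
        Disjoint (carlesonSq p.1 p.2) (carlesonSq q.1 q.2) := by
      rintro ⟨n, k⟩ hp ⟨n', k'⟩ hq hle hne
      rw [Set.disjoint_left]
      intro z h1 h2
      have hq' : k' / 2 ^ (n' - n) < 2 ^ n := by
        rw [Nat.div_lt_iff_lt_mul (by positivity), ← pow_add,
          show n + (n' - n) = n' by omega]
        exact hq.1
      have heq : k = k' / 2 ^ (n' - n) :=
        same_level_eq hp.1 hq' h1 (mem_ancestor hq.1 hle h2)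
      rcases eq_or_lt_of_le hle with h | h
      · apply hne
        simp only at h
        subst h
        simp only [Nat.sub_self, pow_zero, Nat.div_one] at heq
        rw [heq]
      · exact hq.2.2 n h (heq ▸ hp.2.1)
    intro p hp q hq hne
    rcases le_total p.1 q.1 with h | h
    · exact key p hp q hq h hne
    · exact (key q hq p hp h (Ne.symm hne)).symm
  have hdisjtop : M.PairwiseDisjoint (fun p : ℕ × ℕ => carlesonTop p.1 p.2) := by
    intro p hp q hq hne
    exact Set.disjoint_of_subset (fun z hz => hz.1) (fun z hz => hz.1)
      (hdisjsq p hp q hq hne)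
  -- chain
  have step1 : μ {z : ℂ | lam ≤ D z} ≤ μ (⋃ p ∈ M, carlesonSq p.1 p.2) := by
    calc μ {z : ℂ | lam ≤ D z}
        ≤ μ ((⋃ p ∈ M, carlesonSq p.1 p.2) ∪ {z : ℂ | 1 ≤ ‖z‖}) := by
          apply measure_mono
          intro z hz
          rcases lt_or_ge (‖z‖) 1 with h | h
          · exact Or.inl (hA ⟨hz, h⟩)
          · exact Or.inr h
      _ ≤ μ (⋃ p ∈ M, carlesonSq p.1 p.2) + μ {z : ℂ | 1 ≤ ‖z‖} :=
          measure_union_le _ _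
      _ = μ (⋃ p ∈ M, carlesonSq p.1 p.2) := by rw [hsupp, add_zero]
  have step2 : μ (⋃ p ∈ M, carlesonSq p.1 p.2) ≤ ∑' p : M, μ (carlesonSq (p:ℕ×ℕ).1 (p:ℕ×ℕ).2) :=
    measure_biUnion_le μ hMc _
  have step4 : μ (⋃ p ∈ M, carlesonTop p.1 p.2) = ∑' p : M, μ (carlesonTop (p:ℕ×ℕ).1 (p:ℕ×ℕ).2) :=
    measure_biUnion hMc hdisjtop (fun p hp => measurableSet_top hp.1)
  have step5 : (⋃ p ∈ M, carlesonTop p.1 p.2) ⊆ {z : ℂ | lam ≤ d z} := by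
    rintro z hz
    simp only [Set.mem_iUnion] at hz
    obtain ⟨p, hp, hzp⟩ := hz
    have := hd p.1 p.2 hp.1 z hzp
    simp only [Set.mem_setOf_eq, this]
    exact hp.2.1
  calc τ' * μ {z : ℂ | lam ≤ D z}
      ≤ τ' * ∑' p : M, μ (carlesonSq (p:ℕ×ℕ).1 (p:ℕ×ℕ).2) :=
        mul_le_mul_right (step1.trans step2) τ'
    _ = ∑' p : M, τ' * μ (carlesonSq (p:ℕ×ℕ).1 (p:ℕ×ℕ).2) := ENNReal.tsum_mul_left.symm
    _ ≤ ∑' p : M, μ (carlesonTop (p:ℕ×ℕ).1 (p:ℕ×ℕ).2) :=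
        ENNReal.tsum_le_tsum (fun p => hμ (p:ℕ×ℕ).1 (p:ℕ×ℕ).2 p.2.1)
    _ = μ (⋃ p ∈ M, carlesonTop p.1 p.2) := step4.symm
    _ ≤ μ {z : ℂ | lam ≤ d z} := measure_mono step5
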